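/- For |q|<1 and parameters in the region of validity, ₁φ₁ satisfies ₁φ₁(aq²; cq²; q, x) = [(1−cq)(c−ax)((1−c)q + x) / ((1−aq)x)] · ₁φ₁(aq; cq; q, xq) − [(1−c)(1−cq)(cq − x) / ((1−aq)x)] · ₁φ₁(a; c; q, x). -/

import Mathlib

open scoped BigOperators

open Filter

/-- q-shifted factorial (a;q)_j -/
noncomputable def qPoch (a q : ℂ) (j : ℕ) : ℂ :=
  ∏ i ∈ Finset.range j, (1 - a * q ^ i)

/-- infinite q-shifted factorial (a;q)_∞ -/
noncomputable def qPochInf (a q : ℂ) : ℂ :=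
  ∏' j : ℕ, (1 - a * q ^ j)

/-- basic hypergeometric series ₁φ₁(a; c; q, x) -/
noncomputable def phi11 (a c q x : ℂ) : ℂ :=
  ∑' j : ℕ, qPoch a q j / (qPoch q q j * qPoch c q j) *
    (-1) ^ j * q ^ (j * (j - 1) / 2) * x ^ j

/-- basic hypergeometric series ₀φ₁(–; c; q, x) -/
noncomputable def phi01 (c q x : ℂ) : ℂ :=
  ∑' j : ℕ, q ^ (j * (j - 1)) * x ^ j / (qPoch q q j * qPoch c q j)

/-- basic hypergeometric series ₂φ₁(a, b; c; q, x) -/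
noncomputable def phi21 (a b c q x : ℂ) : ℂ :=
  ∑' j : ℕ, qPoch a q j * qPoch b q j / (qPoch q q j * qPoch c q j) * x ^ j

noncomputable def trm (q a c x : ℂ) (j : ℕ) : ℂ :=
  qPoch a q j / (qPoch q q j * qPoch c q j) * (-1) ^ j * q ^ (j * (j - 1) / 2) * x ^ j

lemma phi11_eq_tsum_trm (a c q x : ℂ) : phi11 a c q x = ∑' j, trm q a c x j := rfl

lemma qPoch_succ (α q : ℂ) (m : ℕ) :
    qPoch α q (m + 1) = qPoch α q m * (1 - α * q ^ m) :=
  Finset.prod_range_succ _ _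

lemma qPoch_shift (α q : ℂ) (m : ℕ) :
    qPoch α q (m + 1) = (1 - α) * qPoch (α * q) q m := by
  unfold qPoch
  rw [Finset.prod_range_succ']
  simp only [pow_zero, mul_one]
  rw [mul_comm]
  congr 1
  exact Finset.prod_congr rfl fun i _ => by ring

lemma qPoch_ne_zero {α q : ℂ} (h : ∀ i : ℕ, α * q ^ i ≠ 1) (j : ℕ) :
    qPoch α q j ≠ 0 := by
  unfold qPoch
  exact Finset.prod_ne_zero_iff.mpr fun i _ => sub_ne_zero.mpr (Ne.symm (h i))

lemma q_self_ne_one {q : ℂ} (hq : ‖q‖ < 1) (i : ℕ) : q * q ^ i ≠ 1 := by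
  intro h
  have h1 : ‖q * q ^ i‖ < 1 := by
    rw [norm_mul, norm_pow]
    calc ‖q‖ * ‖q‖ ^ i ≤ ‖q‖ * 1 := by
          gcongr
          exact pow_le_one₀ (norm_nonneg _) hq.le
      _ = ‖q‖ := mul_one _
      _ < 1 := hq
  rw [h, norm_one] at h1
  exact lt_irrefl _ h1

lemma tri_succ (n : ℕ) : (n + 1) * (n + 1 - 1) / 2 = n * (n - 1) / 2 + n := by
  have h1 : (n + 1).choose 2 = n.choose 1 + n.choose 2 := Nat.choose_succ_succ _ _
  calc (n + 1) * (n + 1 - 1) / 2 = (n + 1).choose 2 := (Nat.choose_two_right _).symm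
    _ = n.choose 1 + n.choose 2 := h1
    _ = n * (n - 1) / 2 + n := by rw [Nat.choose_two_right, Nat.choose_one_right, Nat.add_comm]


lemma summable_trm (q a c x : ℂ) (hq : ‖q‖ < 1) (hc : ∀ i : ℕ, c * q ^ i ≠ 1) :
    Summable (fun j => trm q a c x j) := by
  apply summable_of_ratio_norm_eventually_le (r := 1/2) (by norm_num)
  have h0 : Tendsto (fun j : ℕ => q ^ j) atTop (nhds 0) :=
    tendsto_pow_atTop_nhds_zero_of_norm_lt_one hq
  have hρ : Tendsto (fun j : ℕ => ((1 - a * q ^ j) * q ^ j * x) /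
      ((1 - q * q ^ j) * (1 - c * q ^ j))) atTop (nhds 0) := by
    have hnum : Tendsto (fun j : ℕ => (1 - a * q ^ j) * q ^ j * x) atTop
        (nhds ((1 - a * 0) * 0 * x)) :=
      ((tendsto_const_nhds.sub (h0.const_mul a)).mul h0).mul tendsto_const_nhds
    have hden : Tendsto (fun j : ℕ => (1 - q * q ^ j) * (1 - c * q ^ j)) atTop
        (nhds ((1 - q * 0) * (1 - c * 0))) :=
      (tendsto_const_nhds.sub (h0.const_mul q)).mul (tendsto_const_nhds.sub (h0.const_mul c))
    have := hnum.div hden (by norm_num)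
    rwa [show ((1 - a * 0) * 0 * x) / ((1 - q * 0) * (1 - c * 0)) = (0:ℂ) by simp] at this
  have hev : ∀ᶠ j : ℕ in atTop, ‖((1 - a * q ^ j) * q ^ j * x) /
      ((1 - q * q ^ j) * (1 - c * q ^ j))‖ ≤ 1/2 := by
    have := hρ.norm
    rw [norm_zero] at this
    exact this.eventually_le_const (by norm_num)
  filter_upwards [hev] with j hj
  have hD : qPoch q q j ≠ 0 := qPoch_ne_zero (q_self_ne_one hq) j
  have hC : qPoch c q j ≠ 0 := qPoch_ne_zero hc j
  have hq1 : (1 : ℂ) - q * q ^ j ≠ 0 := sub_ne_zero.mpr (Ne.symm (q_self_ne_one hq j))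
  have hc1 : (1 : ℂ) - c * q ^ j ≠ 0 := sub_ne_zero.mpr (Ne.symm (hc j))
  have hrec : trm q a c x (j + 1) =
      -(((1 - a * q ^ j) * q ^ j * x) / ((1 - q * q ^ j) * (1 - c * q ^ j))) *
        trm q a c x j := by
    unfold trm
    rw [qPoch_succ a, qPoch_succ q, qPoch_succ c, tri_succ, pow_add, pow_succ x, pow_succ (-1)]
    field_simp
    ring
  rw [hrec, norm_mul, norm_neg]
  exact mul_le_mul_of_nonneg_right hj (norm_nonneg _)


set_option maxHeartbeats 2000000 in
lemma key_identity (q a c x : ℂ) (hq : ‖q‖ < 1) (hc : ∀ i : ℕ, c * q ^ i ≠ 1)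
    (ha : a * q ≠ 1) (n : ℕ) :
    (1 - c*q)*c*(1-c)*q * trm q (a*q) (c*q) (x*q) (n+1+1)
      - (1-c)*(1-c*q)*c*q * trm q a c x (n+1+1)
      + (1-c*q)*(c - a*(1-c)*q)*x * trm q (a*q) (c*q) (x*q) (n+1)
      + (1-c)*(1-c*q)*x * trm q a c x (n+1)
      - (1-a*q)*x * trm q (a*q^2) (c*q^2) x (n+1)
      - (1-c*q)*a*x^2 * trm q (a*q) (c*q) (x*q) n = 0 := by
  have haq0 : (1 : ℂ) - a*q ≠ 0 := sub_ne_zero.mpr (Ne.symm ha)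
  have hc0 : (1 : ℂ) - c ≠ 0 := by
    have := hc 0; rw [pow_zero, mul_one] at this; exact sub_ne_zero.mpr (Ne.symm this)
  have hcq0 : (1 : ℂ) - c*q ≠ 0 := by
    have := hc 1; rw [pow_one] at this; exact sub_ne_zero.mpr (Ne.symm this)
  have hcn1 : (1 : ℂ) - c*q^(n+1) ≠ 0 := sub_ne_zero.mpr (Ne.symm (hc (n+1)))
  have hcqn : (1 : ℂ) - c*q*q^n ≠ 0 :=
    sub_ne_zero.mpr fun hh => hc (n+1) (by linear_combination -hh)
  have hcqn1 : (1 : ℂ) - c*q*q^(n+1) ≠ 0 :=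
    sub_ne_zero.mpr fun hh => hc (n+2) (by linear_combination -hh)
  have hqn : (1 : ℂ) - q*q^n ≠ 0 := sub_ne_zero.mpr (Ne.symm (q_self_ne_one hq n))
  have hqn1 : (1 : ℂ) - q*q^(n+1) ≠ 0 := sub_ne_zero.mpr (Ne.symm (q_self_ne_one hq (n+1)))
  have hD : qPoch q q n ≠ 0 := qPoch_ne_zero (q_self_ne_one hq) n
  have hP : qPoch (c*q) q n ≠ 0 :=
    qPoch_ne_zero (fun i hh => hc (i+1) (by linear_combination -hh + 2*hh)) n
  -- rewrites to base index n
  have hB1 : qPoch (a*q) q (n+1) = qPoch (a*q) q n * (1 - a*q*q^n) := qPoch_succ _ _ _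
  have hB2 : qPoch (a*q) q (n+1+1)
      = qPoch (a*q) q n * (1 - a*q*q^n) * (1 - a*q*q^(n+1)) := by
    rw [qPoch_succ, qPoch_succ]
  have hA1 : qPoch a q (n+1) = (1-a) * qPoch (a*q) q n := qPoch_shift _ _ _
  have hA2 : qPoch a q (n+1+1) = (1-a) * (qPoch (a*q) q n * (1 - a*q*q^n)) := by
    rw [qPoch_shift a q (n+1), hB1]
  have hAw : qPoch (a*q^2) q (n+1)
      = qPoch (a*q) q n * (1 - a*q*q^n) * (1 - a*q*q^(n+1)) / (1 - a*q) := by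
    have h := qPoch_shift (a*q) q (n+1)
    rw [qPoch_succ, qPoch_succ] at h
    rw [show a*q^2 = a*q*q from by ring, eq_div_iff haq0]
    linear_combination -h
  have hC1 : qPoch (c*q) q (n+1) = qPoch (c*q) q n * (1 - c*q*q^n) := qPoch_succ _ _ _
  have hC2 : qPoch (c*q) q (n+1+1)
      = qPoch (c*q) q n * (1 - c*q*q^n) * (1 - c*q*q^(n+1)) := by
    rw [qPoch_succ, qPoch_succ]
  have hc1 : qPoch c q (n+1) = (1-c) * qPoch (c*q) q n := qPoch_shift _ _ _
  have hc2 : qPoch c q (n+1+1) = (1-c) * (qPoch (c*q) q n * (1 - c*q*q^n)) := by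
    rw [qPoch_shift c q (n+1), hC1]
  have hCw : qPoch (c*q^2) q (n+1)
      = qPoch (c*q) q n * (1 - c*q*q^n) * (1 - c*q*q^(n+1)) / (1 - c*q) := by
    have h := qPoch_shift (c*q) q (n+1)
    rw [qPoch_succ, qPoch_succ] at h
    rw [show c*q^2 = c*q*q from by ring, eq_div_iff hcq0]
    linear_combination -h
  have hD1 : qPoch q q (n+1) = qPoch q q n * (1 - q*q^n) := qPoch_succ _ _ _
  have hD2 : qPoch q q (n+1+1) = qPoch q q n * (1 - q*q^n) * (1 - q*q^(n+1)) := by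
    rw [qPoch_succ, qPoch_succ]
  have e1 : q ^ ((n+1) * (n+1-1) / 2) = q ^ (n*(n-1)/2) * q^n := by
    rw [tri_succ, pow_add]
  have e2 : q ^ ((n+1+1) * (n+1+1-1) / 2) = q ^ (n*(n-1)/2) * q^n * q^(n+1) := by
    rw [tri_succ (n+1), pow_add, e1]
  unfold trm
  rw [hB2, hB1, hA2, hA1, hAw, hC2, hC1, hc2, hc1, hCw, hD2, hD1, e2, e1]
  simp only [mul_pow, pow_succ] at *
  generalize qPoch (a*q) q n = B at *
  generalize hDg : qPoch q q n = D at *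
  generalize hPg : qPoch (c*q) q n = P at *
  generalize hQg : q^n = Q at *
  generalize hXg : x^n = X at *
  generalize hSg : (-1:ℂ)^n = S at *
  generalize hEg : q^(n*(n-1)/2) = E at *
  have hq2 : (1:ℂ) - q*(Q*q) ≠ 0 := hqn1
  set CDf := D * P * ((1 - q*Q)*(1 - q*(Q*q))*(1 - c*q*Q)*(1 - c*q*(Q*q))*(1 - c)*(1 - c*q)*(1 - a*q)) with hCDdef
  have hbr : (1 - q*Q)*(1 - q*(Q*q))*(1 - c*q*Q)*(1 - c*q*(Q*q))*(1 - c)*(1 - c*q)*(1 - a*q) ≠ 0 :=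
    mul_ne_zero (mul_ne_zero (mul_ne_zero (mul_ne_zero (mul_ne_zero (mul_ne_zero hqn hqn1) hcqn) hcqn1) hc0) hcq0) haq0
  have hCD : CDf ≠ 0 := by
    rw [hCDdef]; exact mul_ne_zero (mul_ne_zero hD hP) hbr
  have k1 : B * (1 - a * q * Q) * (1 - a * q * (Q * q)) /
        (D * (1 - q * Q) * (1 - q * (Q * q)) * (P * (1 - c * q * Q) * (1 - c * q * (Q * q))))
      = B * (1 - a*q*Q) * (1 - a*q*(Q*q)) * ((1 - c)*(1 - c*q)*(1 - a*q)) / CDf := by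
    rw [div_eq_div_iff (mul_ne_zero (mul_ne_zero (mul_ne_zero hD hqn) hqn1)
      (mul_ne_zero (mul_ne_zero hP hcqn) hcqn1)) hCD, hCDdef]
    ring
  have k2 : (1 - a) * (B * (1 - a * q * Q)) /
        (D * (1 - q * Q) * (1 - q * (Q * q)) * ((1 - c) * (P * (1 - c * q * Q))))
      = (1 - a) * (B * (1 - a*q*Q)) * ((1 - c*q*(Q*q))*(1 - c*q)*(1 - a*q)) / CDf := by
    rw [div_eq_div_iff (mul_ne_zero (mul_ne_zero (mul_ne_zero hD hqn) hqn1)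
      (mul_ne_zero hc0 (mul_ne_zero hP hcqn))) hCD, hCDdef]
    ring
  have k3 : B * (1 - a * q * Q) / (D * (1 - q * Q) * (P * (1 - c * q * Q)))
      = B * (1 - a*q*Q) * ((1 - q*(Q*q))*(1 - c*q*(Q*q))*(1 - c)*(1 - c*q)*(1 - a*q)) / CDf := by
    rw [div_eq_div_iff (mul_ne_zero (mul_ne_zero hD hqn) (mul_ne_zero hP hcqn)) hCD, hCDdef]
    ring
  have k4 : (1 - a) * B / (D * (1 - q * Q) * ((1 - c) * P))
      = (1 - a) * B * ((1 - q*(Q*q))*(1 - c*q*Q)*(1 - c*q*(Q*q))*(1 - c*q)*(1 - a*q)) / CDf := by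
    rw [div_eq_div_iff (mul_ne_zero (mul_ne_zero hD hqn) (mul_ne_zero hc0 hP)) hCD, hCDdef]
    ring
  have k5 : B * (1 - a * q * Q) * (1 - a * q * (Q * q)) / (1 - a * q) /
        (D * (1 - q * Q) * (P * (1 - c * q * Q) * (1 - c * q * (Q * q)) / (1 - c * q)))
      = B * (1 - a*q*Q) * (1 - a*q*(Q*q)) * (1 - c*q) * ((1 - q*(Q*q))*(1 - c)*(1 - c*q)) / CDf := by
    rw [show D * (1 - q * Q) * (P * (1 - c * q * Q) * (1 - c * q * (Q * q)) / (1 - c * q))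
        = (D * (1 - q * Q) * (P * (1 - c * q * Q) * (1 - c * q * (Q * q)))) / (1 - c * q) from by
      ring]
    rw [div_div_eq_mul_div, div_mul_eq_mul_div, div_div,
      div_eq_div_iff (mul_ne_zero haq0 (mul_ne_zero (mul_ne_zero hD hqn)
        (mul_ne_zero (mul_ne_zero hP hcqn) hcqn1))) hCD, hCDdef]
    ring
  have k6 : B / (D * P)
      = B * ((1 - q*Q)*(1 - q*(Q*q))*(1 - c*q*Q)*(1 - c*q*(Q*q))*(1 - c)*(1 - c*q)*(1 - a*q)) / CDf := by
    rw [div_eq_div_iff (mul_ne_zero hD hP) hCD, hCDdef]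
    ring
  rw [k1, k2, k3, k4, k5, k6]
  ring


set_option maxHeartbeats 1600000 in
theorem phi11_three_term_recurrence_mixed (q a c x : ℂ) (hq : ‖q‖ < 1)
    (hc : ∀ n : ℕ, c * q ^ n ≠ 1)
    (ha : a * q ≠ 1) (hx : x ≠ 0) :
    phi11 (a * q ^ 2) (c * q ^ 2) q x
      = (1 - c * q) * (c - a * x) * ((1 - c) * q + x) / ((1 - a * q) * x)
          * phi11 (a * q) (c * q) q (x * q)
        - (1 - c) * (1 - c * q) * (c * q - x) / ((1 - a * q) * x)
          * phi11 a c q x := by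
  have haq0 : (1 : ℂ) - a * q ≠ 0 := sub_ne_zero.mpr (Ne.symm ha)
  have hcu : ∀ i : ℕ, (a * q) * q ^ i ≠ 1 ∨ True := fun _ => Or.inr trivial
  have hc1 : ∀ i : ℕ, (c * q) * q ^ i ≠ 1 := fun i hh => hc (i + 1) (by linear_combination hh)
  have hc2 : ∀ i : ℕ, (c * q ^ 2) * q ^ i ≠ 1 := fun i hh => hc (i + 2) (by linear_combination hh)
  have Su : Summable (fun j => trm q (a * q) (c * q) (x * q) j) := summable_trm q (a * q) (c * q) (x * q) hq hc1
  have Sv : Summable (fun j => trm q a c x j) := summable_trm q a c x hq hc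
  have Sw : Summable (fun j => trm q (a * q ^ 2) (c * q ^ 2) x j) := summable_trm q (a * q ^ 2) (c * q ^ 2) x hq hc2
  set f : ℕ → ℂ := fun n => (1 - c * q) * c * (1 - c) * q * trm q (a * q) (c * q) (x * q) n
      - (1 - c) * (1 - c * q) * c * q * trm q a c x n with hfdef
  set g : ℕ → ℂ := fun n => (1 - c * q) * (c - a * (1 - c) * q) * x * trm q (a * q) (c * q) (x * q) n
      + (1 - c) * (1 - c * q) * x * trm q a c x n
      - (1 - a * q) * x * trm q (a * q ^ 2) (c * q ^ 2) x n with hgdef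
  set h : ℕ → ℂ := fun n => -((1 - c * q) * a * x ^ 2) * trm q (a * q) (c * q) (x * q) n with hhdef
  have hfs : Summable f := (Su.mul_left _).sub (Sv.mul_left _)
  have hgs : Summable g := ((Su.mul_left _).add (Sv.mul_left _)).sub (Sw.mul_left _)
  have hhs : Summable h := Su.mul_left _
  have hf1 : Summable (fun n => f (n + 1)) := (summable_nat_add_iff 1).mpr hfs
  have hf2 : Summable (fun n => f (n + 1 + 1)) := (summable_nat_add_iff 1).mpr hf1
  have hg1 : Summable (fun n => g (n + 1)) := (summable_nat_add_iff 1).mpr hgs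
  have hkey : ∀ n : ℕ, f (n + 1 + 1) + g (n + 1) + h n = 0 := fun n => by
    simp only [hfdef, hgdef, hhdef]
    linear_combination key_identity q a c x hq hc ha n
  have b0 : f 0 = 0 := by
    simp only [hfdef]
    simp [trm, qPoch]
    ring
  have b1 : f 1 + g 0 = 0 := by
    have hq1 : (1 : ℂ) - q ≠ 0 := by
      have := q_self_ne_one hq 0
      rw [pow_zero, mul_one] at this
      exact sub_ne_zero.mpr (Ne.symm this)
    have hc0 : (1 : ℂ) - c ≠ 0 := by
      have := hc 0
      rw [pow_zero, mul_one] at this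
      exact sub_ne_zero.mpr (Ne.symm this)
    have hcq0 : (1 : ℂ) - c * q ≠ 0 := by
      have := hc 1
      rw [pow_one] at this
      exact sub_ne_zero.mpr (Ne.symm this)
    simp only [hfdef, hgdef]
    simp [trm, qPoch, Finset.prod_range_one]
    have hCD : (1 - q) * (1 - c) * (1 - c * q) ≠ 0 := mul_ne_zero (mul_ne_zero hq1 hc0) hcq0
    have h1 : (1 - a * q) / ((1 - q) * (1 - c * q))
        = (1 - a * q) * (1 - c) / ((1 - q) * (1 - c) * (1 - c * q)) := by
      rw [div_eq_div_iff (mul_ne_zero hq1 hcq0) hCD]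
      ring
    have h2 : (1 - a) / ((1 - q) * (1 - c))
        = (1 - a) * (1 - c * q) / ((1 - q) * (1 - c) * (1 - c * q)) := by
      rw [div_eq_div_iff (mul_ne_zero hq1 hc0) hCD]
      ring
    have h3 : (1 - c * q) * (c - a * (1 - c) * q) * x + (1 - c) * (1 - c * q) * x - (1 - a * q) * x
        = ((1 - c * q) * (c - a * (1 - c) * q) * x + (1 - c) * (1 - c * q) * x - (1 - a * q) * x)
            * ((1 - q) * (1 - c) * (1 - c * q)) / ((1 - q) * (1 - c) * (1 - c * q)) :=
      (mul_div_cancel_right₀ _ hCD).symm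
    rw [h1, h2, h3]
    ring
  have E : (∑' n, f n) + (∑' n, g n) + (∑' n, h n) = 0 := by
    have hz : ∑' n, (f (n + 1 + 1) + g (n + 1) + h n) = 0 := by
      simp only [hkey]
      exact tsum_zero
    calc (∑' n, f n) + (∑' n, g n) + (∑' n, h n)
        = (f 0 + (f (0 + 1) + ∑' n, f (n + 1 + 1))) + (g 0 + ∑' n, g (n + 1)) + ∑' n, h n := by
          rw [hfs.tsum_eq_zero_add, hf1.tsum_eq_zero_add, hgs.tsum_eq_zero_add]
      _ = f 0 + (f (0 + 1) + g 0) + ∑' n, (f (n + 1 + 1) + g (n + 1) + h n) := by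
          rw [Summable.tsum_add (hf2.add hg1) hhs, Summable.tsum_add hf2 hg1]
          ring
      _ = 0 := by
          rw [hz, b0]
          have : f (0 + 1) + g 0 = 0 := by rw [Nat.zero_add]; exact b1
          rw [add_zero, zero_add, this]
  have ef : ∑' n, f n = (1 - c * q) * c * (1 - c) * q * phi11 (a * q) (c * q) q (x * q)
      - (1 - c) * (1 - c * q) * c * q * phi11 a c q x := by
    simp only [hfdef]
    rw [Summable.tsum_sub (Su.mul_left _) (Sv.mul_left _), tsum_mul_left, tsum_mul_left,
      phi11_eq_tsum_trm, phi11_eq_tsum_trm]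
  have eg : ∑' n, g n = (1 - c * q) * (c - a * (1 - c) * q) * x * phi11 (a * q) (c * q) q (x * q)
      + (1 - c) * (1 - c * q) * x * phi11 a c q x
      - (1 - a * q) * x * phi11 (a * q ^ 2) (c * q ^ 2) q x := by
    simp only [hgdef]
    rw [Summable.tsum_sub ((Su.mul_left _).add (Sv.mul_left _)) (Sw.mul_left _),
      Summable.tsum_add (Su.mul_left _) (Sv.mul_left _), tsum_mul_left, tsum_mul_left, tsum_mul_left,
      phi11_eq_tsum_trm, phi11_eq_tsum_trm, phi11_eq_tsum_trm]
  have eh : ∑' n, h n = -((1 - c * q) * a * x ^ 2) * phi11 (a * q) (c * q) q (x * q) := by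
    simp only [hhdef]
    rw [tsum_mul_left, phi11_eq_tsum_trm]
  rw [ef, eg, eh] at E
  have hax : (1 - a * q) * x ≠ 0 := mul_ne_zero haq0 hx
  rw [div_mul_eq_mul_div, div_mul_eq_mul_div, ← sub_div, eq_comm, div_eq_iff hax, eq_comm]
  linear_combination -E
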